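/- If A is an n×n real matrix, then A² has at most n² − 1 negative entries. -/

import Mathlib

open Finset

/-- Perron-type lemma: an entrywise positive real matrix has a positive eigenvalue
with a strictly positive eigenvector, whose eigenspace is one-dimensional. -/
lemma perron_exists {n : ℕ} (hn : 0 < n) (P : Matrix (Fin n) (Fin n) ℝ)
    (hP : ∀ i j, 0 < P i j) :
    ∃ r : ℝ, 0 < r ∧ ∃ v : Fin n → ℝ, (∀ i, 0 < v i) ∧ P.mulVec v = r • v ∧
      ∀ u : Fin n → ℝ, P.mulVec u = r • u → ∃ c : ℝ, u = c • v := by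
  have hne : (Finset.univ : Finset (Fin n)).Nonempty := ⟨⟨0, hn⟩, mem_univ _⟩
  have hmv : ∀ (w : Fin n → ℝ) (i : Fin n), P.mulVec w i = ∑ j, P i j * w j := by
    intro w i; simp [Matrix.mulVec, dotProduct]
  set C : ℝ := ∑ i, ∑ j, P i j with hC
  set K : Set (ℝ × (Fin n → ℝ)) :=
    {p | 0 ≤ p.1 ∧ (∀ i, 0 ≤ p.2 i) ∧ (∑ i, p.2 i) = 1 ∧
      ∀ i, p.1 * p.2 i ≤ P.mulVec p.2 i} with hKdef
  -- K is closed
  have hcl : IsClosed K := by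
    have e : K = {p : ℝ × (Fin n → ℝ) | 0 ≤ p.1} ∩
        ((⋂ i, {p : ℝ × (Fin n → ℝ) | 0 ≤ p.2 i}) ∩
          ({p : ℝ × (Fin n → ℝ) | (∑ i, p.2 i) = 1} ∩
            ⋂ i, {p : ℝ × (Fin n → ℝ) | p.1 * p.2 i ≤ P.mulVec p.2 i})) := by
      ext p
      simp only [hKdef, Set.mem_setOf_eq, Set.mem_inter_iff, Set.mem_iInter]
    rw [e]
    have hc2 : ∀ i : Fin n, Continuous fun p : ℝ × (Fin n → ℝ) => P.mulVec p.2 i := by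
      intro i
      have : (fun p : ℝ × (Fin n → ℝ) => P.mulVec p.2 i)
          = fun p : ℝ × (Fin n → ℝ) => ∑ j, P i j * p.2 j := by
        funext p; exact hmv _ _
      rw [this]
      exact continuous_finset_sum _ fun j _ =>
        continuous_const.mul ((continuous_apply j).comp continuous_snd)
    refine (isClosed_le continuous_const continuous_fst).inter
      ((isClosed_iInter fun i => isClosed_le continuous_const
          ((continuous_apply i).comp continuous_snd)).inter
        ((isClosed_eq (continuous_finset_sum _ fun i _ =>
            (continuous_apply i).comp continuous_snd) continuous_const).inter
          (isClosed_iInter fun i => isClosed_le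
            (continuous_fst.mul ((continuous_apply i).comp continuous_snd)) (hc2 i))))
  -- K is contained in a compact box
  have hsub : K ⊆ Set.Icc (0:ℝ) C ×ˢ Set.Icc (0 : Fin n → ℝ) 1 := by
    rintro ⟨t, v⟩ ⟨ht, hv, hs, hle⟩
    have hv1 : ∀ i, v i ≤ 1 := by
      intro i
      calc v i ≤ ∑ j, v j := Finset.single_le_sum (fun j _ => hv j) (mem_univ i)
        _ = 1 := hs
    have htC : t ≤ C := by
      calc t = t * ∑ i, v i := by rw [hs, mul_one]
        _ = ∑ i, t * v i := by rw [Finset.mul_sum]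
        _ ≤ ∑ i, P.mulVec v i := Finset.sum_le_sum fun i _ => hle i
        _ = ∑ i, ∑ j, P i j * v j := by simp [hmv]
        _ ≤ ∑ i, ∑ j, P i j * 1 := by
            refine Finset.sum_le_sum fun i _ => Finset.sum_le_sum fun j _ => ?_
            exact mul_le_mul_of_nonneg_left (hv1 j) (hP i j).le
        _ = C := by simp [hC]
    refine ⟨⟨ht, htC⟩, ?_, ?_⟩
    · intro i; exact hv i
    · intro i; exact hv1 i
  have hKcomp : IsCompact K :=
    IsCompact.of_isClosed_subset (isCompact_Icc.prod isCompact_Icc) hcl hsub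
  -- a good starting element of K
  obtain ⟨i₁, -, hmin⟩ := Finset.exists_min_image Finset.univ (fun i => ∑ j, P i j) hne
  set t₁ : ℝ := ∑ j, P i₁ j with ht₁
  have ht₁pos : 0 < t₁ := Finset.sum_pos (fun j _ => hP i₁ j) hne
  have hnR : (0:ℝ) < (n : ℝ) := by exact_mod_cast hn
  have hmem1 : ((t₁ : ℝ), fun _ : Fin n => (n : ℝ)⁻¹) ∈ K := by
    refine ⟨ht₁pos.le, fun i => by positivity, ?_, ?_⟩
    · simp [Finset.sum_const, nsmul_eq_mul]
      field_simp
    · intro i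
      have h1 : t₁ ≤ ∑ j, P i j := hmin i (mem_univ i)
      rw [hmv]
      calc t₁ * (n:ℝ)⁻¹ ≤ (∑ j, P i j) * (n:ℝ)⁻¹ := by
            exact mul_le_mul_of_nonneg_right h1 (by positivity)
        _ = ∑ j, P i j * (n:ℝ)⁻¹ := by rw [Finset.sum_mul]
  -- take the maximum of p.1 on K
  obtain ⟨⟨r, v⟩, hrvK, hmax⟩ :=
    hKcomp.exists_isMaxOn ⟨_, hmem1⟩ continuous_fst.continuousOn
  obtain ⟨hr0, hv0, hvs, hvle⟩ := hrvK
  have hrt : t₁ ≤ r := hmax hmem1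
  have hrpos : 0 < r := lt_of_lt_of_le ht₁pos hrt
  -- v has a positive coordinate
  have hvex : ∃ j, 0 < v j := by
    by_contra h
    push_neg at h
    have : ∑ i, v i = 0 := le_antisymm (Finset.sum_nonpos fun i _ => h i)
      (Finset.sum_nonneg fun i _ => hv0 i)
    rw [hvs] at this; norm_num at this
  -- P.mulVec v is strictly positive
  have hy : ∀ i, 0 < P.mulVec v i := by
    intro i
    obtain ⟨j₁, hj₁⟩ := hvex
    rw [hmv]
    calc (0:ℝ) < P i j₁ * v j₁ := mul_pos (hP i j₁) hj₁
      _ ≤ ∑ j, P i j * v j := Finset.single_le_sum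
          (fun j _ => mul_nonneg (hP i j).le (hv0 j)) (mem_univ j₁)
  -- the eigenvalue equation
  have heig : P.mulVec v = r • v := by
    by_contra hne'
    set w : Fin n → ℝ := fun i => P.mulVec v i - r * v i with hwdef
    have hw0 : ∀ i, 0 ≤ w i := fun i => sub_nonneg.2 (hvle i)
    obtain ⟨j₀, hj₀⟩ : ∃ j, 0 < w j := by
      by_contra h
      push_neg at h
      apply hne'
      funext i
      have := le_antisymm (h i) (hw0 i)
      have : P.mulVec v i = r * v i := by
        have h2 : w i = 0 := le_antisymm (h i) (hw0 i)
        rw [hwdef] at h2; simp at h2; linarith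
      simpa using this
    set y : Fin n → ℝ := P.mulVec v with hydef
    have hyrw : y = r • v + w := by
      funext i
      simp only [hwdef, Pi.add_apply, Pi.smul_apply, smul_eq_mul]
      ring
    have hyw : P.mulVec y = r • y + P.mulVec w := by
      rw [hyrw, Matrix.mulVec_add, Matrix.mulVec_smul, ← hydef, ← hyrw]
    have hPw : ∀ i, 0 < P.mulVec w i := by
      intro i
      rw [hmv]
      calc (0:ℝ) < P i j₀ * w j₀ := mul_pos (hP i j₀) hj₀
        _ ≤ ∑ j, P i j * w j := Finset.single_le_sum
            (fun j _ => mul_nonneg (hP i j).le (hw0 j)) (mem_univ j₀)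
    obtain ⟨i₂, -, hi₂⟩ := Finset.exists_min_image Finset.univ
      (fun i => P.mulVec w i / y i) hne
    set ε : ℝ := P.mulVec w i₂ / y i₂ with hε
    have hεpos : 0 < ε := div_pos (hPw i₂) (hy i₂)
    have hkey : ∀ i, (r + ε) * y i ≤ P.mulVec y i := by
      intro i
      have h1 : ε ≤ P.mulVec w i / y i := hi₂ i (mem_univ i)
      have h2 : ε * y i ≤ P.mulVec w i := by
        rw [← le_div_iff₀ (hy i)]; exact h1
      have h3 : P.mulVec y i = r * y i + P.mulVec w i := by
        rw [hyw]; simp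
      rw [h3]; nlinarith
    set s : ℝ := ∑ i, y i with hs
    have hspos : 0 < s := Finset.sum_pos (fun i _ => hy i) hne
    have hmem2 : ((r + ε), s⁻¹ • y) ∈ K := by
      refine ⟨by positivity, fun i => ?_, ?_, ?_⟩
      · have h := hy i
        show 0 ≤ s⁻¹ * y i
        positivity
      · simp only [Pi.smul_apply, smul_eq_mul, ← Finset.mul_sum]
        field_simp
        exact hs.symm
      · intro i
        have h4 : P.mulVec (s⁻¹ • y) i = s⁻¹ * P.mulVec y i := by
          rw [Matrix.mulVec_smul]; simp
        rw [h4]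
        have h5 : (r + ε) * (s⁻¹ • y) i = s⁻¹ * ((r + ε) * y i) := by
          simp; ring
        rw [h5]
        exact mul_le_mul_of_nonneg_left (hkey i) (by positivity)
    have h6 : r + ε ≤ r := hmax hmem2
    linarith
  -- v is strictly positive
  have hvpos : ∀ i, 0 < v i := by
    intro i
    have h := hy i
    rw [heig] at h
    simp only [Pi.smul_apply, smul_eq_mul] at h
    rcases mul_pos_iff.1 h with ⟨-, h2⟩ | ⟨h1, -⟩
    · exact h2
    · linarith
  refine ⟨r, hrpos, v, hvpos, heig, ?_⟩
  -- simplicity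
  intro u hu
  obtain ⟨i₃, -, hi₃⟩ := Finset.exists_min_image Finset.univ (fun i => u i / v i) hne
  set c : ℝ := u i₃ / v i₃ with hc
  refine ⟨c, ?_⟩
  set w : Fin n → ℝ := u - c • v with hwdef
  have hw0 : ∀ i, 0 ≤ w i := by
    intro i
    have h1 : c ≤ u i / v i := hi₃ i (mem_univ i)
    have h2 : c * v i ≤ u i := by
      rw [← le_div_iff₀ (hvpos i)]; exact h1
    simp [hwdef]; linarith
  have hwi₃ : w i₃ = 0 := by
    have hvne : v i₃ ≠ 0 := (hvpos i₃).ne'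
    simp only [hwdef, hc, Pi.sub_apply, Pi.smul_apply, smul_eq_mul]
    field_simp
    ring
  have hPw : P.mulVec w = r • w := by
    rw [hwdef, Matrix.mulVec_sub, Matrix.mulVec_smul, hu, heig]
    module
  have hwz : w = 0 := by
    by_contra hwne
    obtain ⟨j, hj⟩ : ∃ j, 0 < w j := by
      by_contra h
      push_neg at h
      apply hwne
      funext i
      exact le_antisymm (h i) (hw0 i)
    have h1 : 0 < P.mulVec w i₃ := by
      rw [hmv]
      calc (0:ℝ) < P i₃ j * w j := mul_pos (hP i₃ j) hj
        _ ≤ ∑ k, P i₃ k * w k := Finset.single_le_sum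
            (fun k _ => mul_nonneg (hP i₃ k).le (hw0 k)) (mem_univ j)
    rw [hPw] at h1
    simp [hwi₃] at h1
  exact sub_eq_zero.mp (hwdef ▸ hwz)

theorem square_has_at_most_n_sq_sub_one_negative_entries (n : ℕ)
    (A : Matrix (Fin n) (Fin n) ℝ) :
    (Finset.univ.filter fun p : Fin n × Fin n => (A * A) p.1 p.2 < 0).card ≤ n ^ 2 - 1 := by
  rcases Nat.eq_zero_or_pos n with rfl | hn
  · simp
  have key : ¬ ∀ i j : Fin n, (A * A) i j < 0 := by
    intro hall
    obtain ⟨r, hr, v, hv, heig, hsimp⟩ := perron_exists hn (-(A * A))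
      (fun i j => by simpa using hall i j)
    set u : Fin n → ℝ := A.mulVec v with hu
    have hPu : (-(A * A)).mulVec u = r • u := by
      have hcomm : (-(A * A)) * A = A * (-(A * A)) := by
        rw [neg_mul, mul_neg, mul_assoc]
      calc (-(A * A)).mulVec (A.mulVec v) = ((-(A * A)) * A).mulVec v := by
            rw [Matrix.mulVec_mulVec]
        _ = (A * (-(A * A))).mulVec v := by rw [hcomm]
        _ = A.mulVec ((-(A * A)).mulVec v) := by rw [Matrix.mulVec_mulVec]
        _ = A.mulVec (r • v) := by rw [heig]
        _ = r • u := by rw [Matrix.mulVec_smul, hu]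
    obtain ⟨c, hc⟩ := hsimp u hPu
    -- then (A*A).mulVec v = (c*c) • v and also = -(r • v)
    have h2 : (A * A).mulVec v = (c * c) • v := by
      rw [← Matrix.mulVec_mulVec, ← hu, hc, Matrix.mulVec_smul, ← hu, hc, smul_smul]
    have h3 : (-(A * A)).mulVec v = r • v := heig
    rw [Matrix.neg_mulVec, h2] at h3
    have i0 : Fin n := ⟨0, hn⟩
    have h4 := congrFun h3 i0
    simp only [Pi.neg_apply, Pi.smul_apply, smul_eq_mul] at h4
    have hvp := hv i0
    nlinarith [sq_nonneg c]
  push_neg at key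
  obtain ⟨i, j, hij⟩ := key
  have hss : (Finset.univ.filter fun p : Fin n × Fin n => (A * A) p.1 p.2 < 0) ⊂
      Finset.univ := by
    rw [Finset.ssubset_univ_iff]
    intro h
    have hmem : (i, j) ∈ Finset.univ.filter
        (fun p : Fin n × Fin n => (A * A) p.1 p.2 < 0) := by
      rw [h]; exact Finset.mem_univ _
    rw [Finset.mem_filter] at hmem
    exact absurd hmem.2 (not_lt.2 hij)
  have hlt := Finset.card_lt_card hss
  have hcard : (Finset.univ : Finset (Fin n × Fin n)).card = n ^ 2 := by
    simp [sq]
  omega
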